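/- Let (X, r) be a bijective non-degenerate solution of the Yang–Baxter equation of multipermutation level 1 that is injective (i.e., the natural map X → G(X, r) is injective). Then r is involutive: r² = id on X². -/

import Mathlib

/-- The defining relations of the structure group of the level-1 solution
`r(x,y) = (σ(y), τ(x))`: `x ∘ y = σ(y) ∘ τ(x)`. -/
def levelOneRels {X : Type*} (σ τ : Equiv.Perm X) : Set (FreeGroup X) :=
  {w | ∃ x y : X,
    w = FreeGroup.of x * FreeGroup.of y * (FreeGroup.of (σ y) * FreeGroup.of (τ x))⁻¹}

lemma levelOne_rel {X : Type*} (σ τ : Equiv.Perm X) (x y : X) :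
    (PresentedGroup.of x : PresentedGroup (levelOneRels σ τ)) * PresentedGroup.of y
      = PresentedGroup.of (σ y) * PresentedGroup.of (τ x) := by
  have hmem : (FreeGroup.of x * FreeGroup.of y *
      (FreeGroup.of (σ y) * FreeGroup.of (τ x))⁻¹) ∈ levelOneRels σ τ := ⟨x, y, rfl⟩
  have h1 : (QuotientGroup.mk (FreeGroup.of x * FreeGroup.of y *
      (FreeGroup.of (σ y) * FreeGroup.of (τ x))⁻¹) :
      PresentedGroup (levelOneRels σ τ)) = 1 :=
    (QuotientGroup.eq_one_iff _).2 (Subgroup.subset_normalClosure hmem)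
  have h2 : (PresentedGroup.of x : PresentedGroup (levelOneRels σ τ)) * PresentedGroup.of y *
      (PresentedGroup.of (σ y) * PresentedGroup.of (τ x))⁻¹ = 1 := by
    exact h1
  exact mul_inv_eq_one.mp h2

/-- An injective multipermutation solution of level 1 (i.e. `r(x,y) = (σ(y), τ(x))` with
`σ, τ` commuting permutations, such that the natural map from `X` to the structure group
is injective) is involutive: `r² = id`. -/
theorem injective_level_one_involutive {X : Type*} (σ τ : Equiv.Perm X)
    (hcomm : σ * τ = τ * σ)
    (hinj : Function.Injective
      (PresentedGroup.of : X → PresentedGroup (levelOneRels σ τ))) :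
    ∀ p : X × X,
      (fun q : X × X => (σ q.2, τ q.1)) ((fun q : X × X => (σ q.2, τ q.1)) p) = p := by
  have htau : ∀ x : X, τ x = σ⁻¹ x := by
    intro x
    have h := levelOne_rel σ τ x (σ⁻¹ x)
    rw [show σ (σ⁻¹ x) = x from σ.apply_symm_apply x] at h
    have := mul_left_cancel h
    exact (hinj this.symm)
  rintro ⟨a, b⟩
  simp [htau]
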